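/- (Stability of the wave-equation iteration.) Let W be an N×N real symmetric matrix with nonnegative entries such that each row sum dᵢ = Σⱼ W_{ij} is positive, let L = I − D⁻¹W be the normalized graph Laplacian, and let c be a real constant with 0 < c < √2. For any u₀ ∈ ℝᴺ, define z(0) = (u₀, u₀)ᵀ ∈ ℝ²ᴺ and z(t) = Mᵗ z(0) where M = [[2I − c²L, −I], [I, 0]]. Then the trajectory is bounded: there exists a constant C such that ‖z(t)‖ ≤ C for all t ≥ 0. -/

import Mathlib

open Matrix

lemma wave_scalar (a : ℝ) (ha1 : -2 < a) (ha2 : a ≤ 2) (s : ℕ → ℝ)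
    (h1 : s 1 = a * s 0 - s 0) (hrec : ∀ t, s (t + 2) = a * s (t + 1) - s t) :
    ∀ t, s t ^ 2 ≤ 8 / (2 + a) * s 0 ^ 2 := by
  have ha0 : (0:ℝ) < 2 + a := by linarith
  have he : ∀ t, s (t + 1) ^ 2 - a * s (t + 1) * s t + s t ^ 2 = (2 - a) * s 0 ^ 2 := by
    intro t
    induction t with
    | zero => rw [h1]; ring
    | succ n ih => rw [show n + 1 + 1 = n + 2 from rfl, hrec n]; linear_combination ih
  rcases eq_or_lt_of_le ha2 with heq | hlt
  · subst heq
    have hconst : ∀ t, s t = s 0 := by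
      intro t
      induction t with
      | zero => rfl
      | succ n ih =>
        have h2 : (s (n + 1) - s n) ^ 2 = 0 := by linear_combination he n
        have h3 : s (n + 1) - s n = 0 := by
          exact pow_eq_zero_iff two_ne_zero |>.mp h2
        rw [sub_eq_zero] at h3
        rw [h3, ih]
    intro t
    rw [hconst t]
    nlinarith [sq_nonneg (s 0)]
  · intro t
    rw [div_mul_eq_mul_div, le_div_iff₀ ha0]
    cases t with
    | zero => nlinarith [sq_nonneg (s 0)]
    | succ n => nlinarith [he n, sq_nonneg (2 * s n - a * s (n + 1)), sq_nonneg (s (n+1)), mul_pos (show (0:ℝ) < 2 - a by linarith) ha0]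

/-- the wave iteration, as a pair `(u t, u (t-1))`. -/
def waveSeq {n : ℕ} (A0 : Matrix (Fin n) (Fin n) ℝ) (u0 : Fin n → ℝ) :
    ℕ → (Fin n → ℝ) × (Fin n → ℝ)
  | 0 => (u0, u0)
  | t + 1 => (A0 *ᵥ (waveSeq A0 u0 t).1 - (waveSeq A0 u0 t).2, (waveSeq A0 u0 t).1)

theorem stmt_11 (N : ℕ) (W : Matrix (Fin N) (Fin N) ℝ)
    (hsymm : W.IsSymm) (hnonneg : ∀ i j, 0 ≤ W i j)
    (d : Fin N → ℝ) (hd : ∀ i, d i = ∑ j, W i j) (hdpos : ∀ i, 0 < d i)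
    (c : ℝ) (hc0 : 0 < c) (hc2 : c < Real.sqrt 2) (u₀ : Fin N → ℝ)
    (M : Matrix (Fin N ⊕ Fin N) (Fin N ⊕ Fin N) ℝ)
    (hM : M = Matrix.fromBlocks
      ((2 : Matrix (Fin N) (Fin N) ℝ) -
        c ^ 2 • ((1 : Matrix (Fin N) (Fin N) ℝ) - (Matrix.diagonal d)⁻¹ * W)) (-1) 1 0) :
    ∃ C : ℝ, ∀ t : ℕ, ‖(M ^ t).mulVec (Sum.elim u₀ u₀)‖ ≤ C := by
  -- basic facts
  have hc2' : c ^ 2 < 2 := by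
    nlinarith [Real.sq_sqrt (show (0:ℝ) ≤ 2 by norm_num), Real.sqrt_nonneg 2]
  set A0 : Matrix (Fin N) (Fin N) ℝ :=
    (2 : Matrix (Fin N) (Fin N) ℝ) -
      c ^ 2 • ((1 : Matrix (Fin N) (Fin N) ℝ) - (Matrix.diagonal d)⁻¹ * W) with hA0
  set s : Fin N → ℝ := fun i => Real.sqrt (d i) with hs
  have hspos : ∀ i, 0 < s i := fun i => Real.sqrt_pos.mpr (hdpos i)
  have hssq : ∀ i, s i ^ 2 = d i := fun i => Real.sq_sqrt (hdpos i).le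
  set E : Matrix (Fin N) (Fin N) ℝ := Matrix.diagonal s with hE
  set Einv : Matrix (Fin N) (Fin N) ℝ := Matrix.diagonal (fun i => (s i)⁻¹) with hEinv
  set A : Matrix (Fin N) (Fin N) ℝ := Einv * (Matrix.diagonal d - W) * Einv with hA
  have hDinv : (Matrix.diagonal d)⁻¹ = Matrix.diagonal (fun i => (d i)⁻¹) := by
    apply Matrix.inv_eq_right_inv
    rw [Matrix.diagonal_mul_diagonal]
    convert Matrix.diagonal_one with i
    exact mul_inv_cancel₀ (hdpos i).ne'
  -- conjugation identity
  have hEE : Einv * E = 1 := by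
    rw [hEinv, hE, Matrix.diagonal_mul_diagonal]
    convert Matrix.diagonal_one with i
    exact inv_mul_cancel₀ (hspos i).ne'
  have hEinvD : Einv * Matrix.diagonal d = E := by
    rw [hEinv, Matrix.diagonal_mul_diagonal,
      show (fun i => (s i)⁻¹ * d i) = s from funext fun i => by
        rw [← hssq i]; field_simp [pow_two], hE]
  have hEDinv : E * (Matrix.diagonal d)⁻¹ = Einv := by
    rw [hDinv, hE, Matrix.diagonal_mul_diagonal, hEinv]
    refine congrArg _ (funext fun i => ?_)
    rw [← hssq i]
    field_simp [pow_two, (hspos i).ne']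
  have h2mat : (2 : Matrix (Fin N) (Fin N) ℝ) = (2:ℝ) • 1 := by
    rw [← Matrix.diagonal_one, ← Matrix.diagonal_smul, ← Matrix.diagonal_ofNat]
    exact congrArg _ (funext fun i => by simp)
  have hAE : A * E = E - Einv * W := by
    rw [hA, Matrix.mul_assoc (Einv * (Matrix.diagonal d - W)) Einv E, hEE, Matrix.mul_one,
      Matrix.mul_sub, hEinvD]
  have hconj : E * A0 = ((2:ℝ) • (1 : Matrix (Fin N) (Fin N) ℝ) - c ^ 2 • A) * E := by
    have lhs : E * A0 = (2:ℝ) • E - c ^ 2 • (E - Einv * W) := by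
      rw [hA0, h2mat, Matrix.mul_sub, Matrix.mul_smul, Matrix.mul_smul, Matrix.mul_one,
        Matrix.mul_sub, Matrix.mul_one, ← Matrix.mul_assoc, hEDinv]
    have rhs : ((2:ℝ) • (1 : Matrix (Fin N) (Fin N) ℝ) - c ^ 2 • A) * E
        = (2:ℝ) • E - c ^ 2 • (E - Einv * W) := by
      rw [Matrix.sub_mul, Matrix.smul_mul, Matrix.one_mul, Matrix.smul_mul, hAE]
    rw [lhs, rhs]
  -- A is symmetric (Hermitian)
  have hWh : W.IsHermitian := by
    rw [Matrix.IsHermitian, Matrix.conjTranspose_eq_transpose_of_trivial]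
    exact hsymm
  have hBh : (Matrix.diagonal d - W).IsHermitian :=
    (Matrix.isHermitian_diagonal d).sub hWh
  have hEih : Einv.IsHermitian := Matrix.isHermitian_diagonal _
  have hAh : A.IsHermitian := by
    rw [hA]
    nth_rewrite 1 [← hEih.eq]
    exact Matrix.isHermitian_conjTranspose_mul_mul Einv hBh
  -- quadratic form bounds
  have hdot1 : ∀ x : Fin N → ℝ, x ⬝ᵥ (Matrix.diagonal d *ᵥ x) = ∑ i, ∑ j, W i j * x i ^ 2 := by
    intro x
    rw [dotProduct]
    refine Finset.sum_congr rfl fun i _ => ?_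
    rw [Matrix.mulVec_diagonal, hd i, Finset.sum_mul, Finset.mul_sum]
    exact Finset.sum_congr rfl fun j _ => by ring
  have hdot2 : ∀ x : Fin N → ℝ, x ⬝ᵥ (W *ᵥ x) = ∑ i, ∑ j, W i j * (x i * x j) := by
    intro x
    rw [dotProduct]
    refine Finset.sum_congr rfl fun i _ => ?_
    rw [Matrix.mulVec, dotProduct, Finset.mul_sum]
    exact Finset.sum_congr rfl fun j _ => by ring
  have hWapp : ∀ i j, W j i = W i j := fun i j => hsymm.apply i j
  have hswap : ∀ x : Fin N → ℝ, (∑ i, ∑ j, W i j * x j ^ 2) = ∑ i, ∑ j, W i j * x i ^ 2 := by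
    intro x
    rw [Finset.sum_comm]
    exact Finset.sum_congr rfl fun i _ => Finset.sum_congr rfl fun j _ => by rw [hWapp i j]
  have hquadm : ∀ x : Fin N → ℝ, x ⬝ᵥ ((Matrix.diagonal d - W) *ᵥ x)
      = (1/2) * ∑ i, ∑ j, W i j * (x i - x j) ^ 2 := by
    intro x
    rw [Matrix.sub_mulVec, dotProduct_sub, hdot1, hdot2]
    have : ∀ i j, W i j * (x i - x j) ^ 2
        = W i j * x i ^ 2 + W i j * x j ^ 2 - 2 * (W i j * (x i * x j)) := fun i j => by ring
    simp_rw [this, Finset.sum_sub_distrib, Finset.sum_add_distrib, ← Finset.mul_sum, hswap x]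
    ring
  have hquadp : ∀ x : Fin N → ℝ, x ⬝ᵥ (Matrix.diagonal d *ᵥ x) + x ⬝ᵥ (W *ᵥ x)
      = (1/2) * ∑ i, ∑ j, W i j * (x i + x j) ^ 2 := by
    intro x
    rw [hdot1, hdot2]
    have : ∀ i j, W i j * (x i + x j) ^ 2
        = W i j * x i ^ 2 + W i j * x j ^ 2 + 2 * (W i j * (x i * x j)) := fun i j => by ring
    simp_rw [this, Finset.sum_add_distrib, ← Finset.mul_sum, hswap x]
    ring
  have hdiagsym : ∀ (f v w : Fin N → ℝ),
      v ⬝ᵥ (Matrix.diagonal f *ᵥ w) = (Matrix.diagonal f *ᵥ v) ⬝ᵥ w := by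
    intro f v w
    rw [dotProduct, dotProduct]
    exact Finset.sum_congr rfl fun i _ => by rw [Matrix.mulVec_diagonal, Matrix.mulVec_diagonal]; ring
  have hAy : ∀ y : Fin N → ℝ, y ⬝ᵥ (A *ᵥ y)
      = (Einv *ᵥ y) ⬝ᵥ ((Matrix.diagonal d - W) *ᵥ (Einv *ᵥ y)) := by
    intro y
    rw [hA, ← Matrix.mulVec_mulVec, ← Matrix.mulVec_mulVec, hEinv, hdiagsym]
  have hyy : ∀ y : Fin N → ℝ, y ⬝ᵥ y
      = (Einv *ᵥ y) ⬝ᵥ (Matrix.diagonal d *ᵥ (Einv *ᵥ y)) := by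
    intro y
    rw [dotProduct, dotProduct]
    refine Finset.sum_congr rfl fun i _ => ?_
    rw [Matrix.mulVec_diagonal, hEinv, Matrix.mulVec_diagonal, Matrix.mulVec_diagonal]
    rw [← hssq i]
    field_simp [(hspos i).ne']
  have hq0 : ∀ y : Fin N → ℝ, 0 ≤ y ⬝ᵥ (A *ᵥ y) := by
    intro y
    rw [hAy, hquadm]
    have : (0:ℝ) ≤ ∑ i, ∑ j, W i j * ((Einv *ᵥ y) i - (Einv *ᵥ y) j) ^ 2 :=
      Finset.sum_nonneg fun i _ => Finset.sum_nonneg fun j _ =>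
        mul_nonneg (hnonneg i j) (sq_nonneg _)
    linarith
  have hq2 : ∀ y : Fin N → ℝ, y ⬝ᵥ (A *ᵥ y) ≤ 2 * (y ⬝ᵥ y) := by
    intro y
    have h1 : (0:ℝ) ≤ ∑ i, ∑ j, W i j * ((Einv *ᵥ y) i + (Einv *ᵥ y) j) ^ 2 :=
      Finset.sum_nonneg fun i _ => Finset.sum_nonneg fun j _ =>
        mul_nonneg (hnonneg i j) (sq_nonneg _)
    have h2 := hquadp (Einv *ᵥ y)
    have h3 := hAy y
    have h4 := hyy y
    rw [Matrix.sub_mulVec, dotProduct_sub] at h3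
    linarith
  -- eigenvalue bounds
  have hinner : ∀ f g : EuclideanSpace ℝ (Fin N), (inner ℝ f g : ℝ) = (⇑f) ⬝ᵥ (⇑g) := by
    intro f g
    simp [PiLp.inner_apply, RCLike.inner_apply, dotProduct, mul_comm]
  have hbnorm : ∀ k, (⇑(hAh.eigenvectorBasis k) : Fin N → ℝ) ⬝ᵥ ⇑(hAh.eigenvectorBasis k) = 1 := by
    intro k
    rw [← hinner, real_inner_self_eq_norm_sq, hAh.eigenvectorBasis.orthonormal.1 k]
    norm_num
  have hμ : ∀ k, (⇑(hAh.eigenvectorBasis k) : Fin N → ℝ) ⬝ᵥ (A *ᵥ ⇑(hAh.eigenvectorBasis k))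
      = hAh.eigenvalues k := by
    intro k
    rw [hAh.mulVec_eigenvectorBasis, dotProduct_smul, smul_eq_mul, hbnorm, mul_one]
  have heig : ∀ k, 0 ≤ hAh.eigenvalues k ∧ hAh.eigenvalues k ≤ 2 := by
    intro k
    have h0 := hq0 (⇑(hAh.eigenvectorBasis k))
    have h2 := hq2 (⇑(hAh.eigenvectorBasis k))
    rw [hμ k] at h0 h2
    rw [hbnorm k] at h2
    exact ⟨h0, by linarith⟩
  -- the trajectory
  set p : ℕ → (Fin N → ℝ) × (Fin N → ℝ) := waveSeq A0 u₀ with hp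
  have hMz : ∀ t, (M ^ t) *ᵥ (Sum.elim u₀ u₀) = Sum.elim (p t).1 (p t).2 := by
    intro t
    induction t with
    | zero => simp [hp, waveSeq]
    | succ n ih =>
      rw [pow_succ', ← Matrix.mulVec_mulVec, ih, hM, Matrix.fromBlocks_mulVec,
        Sum.elim_comp_inl, Sum.elim_comp_inr]
      have h1 : (p (n+1)).1 = A0 *ᵥ (p n).1 - (p n).2 := rfl
      have h2 : (p (n+1)).2 = (p n).1 := rfl
      rw [h1, h2, Matrix.neg_mulVec, Matrix.one_mulVec, Matrix.one_mulVec, Matrix.zero_mulVec,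
        add_zero, ← sub_eq_add_neg]
  -- transformed trajectory
  set y : ℕ → (Fin N → ℝ) := fun t => E *ᵥ (p t).1 with hy
  have hyQ : ∀ v : Fin N → ℝ, E *ᵥ (A0 *ᵥ v) = (2:ℝ) • (E *ᵥ v) - c ^ 2 • (A *ᵥ (E *ᵥ v)) := by
    intro v
    rw [Matrix.mulVec_mulVec, hconj, ← Matrix.mulVec_mulVec, Matrix.sub_mulVec,
      Matrix.smul_mulVec, Matrix.one_mulVec, Matrix.smul_mulVec]
  have hAt : Aᵀ = A := by
    rw [← Matrix.conjTranspose_eq_transpose_of_trivial, hAh.eq]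
  have hAdot : ∀ k (w : Fin N → ℝ),
      ⇑(hAh.eigenvectorBasis k) ⬝ᵥ (A *ᵥ w) = hAh.eigenvalues k * (⇑(hAh.eigenvectorBasis k) ⬝ᵥ w) := by
    intro k w
    rw [dotProduct_mulVec, ← Matrix.mulVec_transpose, hAt, hAh.mulVec_eigenvectorBasis,
      smul_dotProduct, smul_eq_mul]
  -- per-mode bound
  set Kbig : ℝ := 8 / (4 - 2 * c ^ 2) with hK
  have hKpos : 0 < 4 - 2 * c ^ 2 := by linarith
  have hKnonneg : 0 ≤ Kbig := by positivity
  have hmode : ∀ k t, (⇑(hAh.eigenvectorBasis k) ⬝ᵥ y t) ^ 2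
      ≤ Kbig * (⇑(hAh.eigenvectorBasis k) ⬝ᵥ y 0) ^ 2 := by
    intro k t
    set a : ℝ := 2 - c ^ 2 * hAh.eigenvalues k with ha
    set g : ℕ → ℝ := fun t => ⇑(hAh.eigenvectorBasis k) ⬝ᵥ y t with hg
    have hdotrec : ∀ m, g (m + 2) = a * g (m + 1) - g m := by
      intro m
      have hrec : (p (m + 2)).1 = A0 *ᵥ (p (m + 1)).1 - (p m).1 := rfl
      have : y (m + 2) = (2:ℝ) • y (m + 1) - c ^ 2 • (A *ᵥ y (m + 1)) - y m := by
        rw [hy]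
        show E *ᵥ (p (m+2)).1 = _
        rw [hrec, Matrix.mulVec_sub, hyQ]
      rw [hg]
      show ⇑(hAh.eigenvectorBasis k) ⬝ᵥ y (m + 2) = _
      rw [this, dotProduct_sub, dotProduct_sub, dotProduct_smul,
        dotProduct_smul, hAdot, smul_eq_mul, smul_eq_mul]
      ring
    have hdot1' : g 1 = a * g 0 - g 0 := by
      have hrec : (p 1).1 = A0 *ᵥ (p 0).1 - (p 0).1 := rfl
      have : y 1 = (2:ℝ) • y 0 - c ^ 2 • (A *ᵥ y 0) - y 0 := by
        rw [hy]
        show E *ᵥ (p 1).1 = _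
        rw [hrec, Matrix.mulVec_sub, hyQ]
      rw [hg]
      show ⇑(hAh.eigenvectorBasis k) ⬝ᵥ y 1 = _
      rw [this, dotProduct_sub, dotProduct_sub, dotProduct_smul,
        dotProduct_smul, hAdot, smul_eq_mul, smul_eq_mul]
      ring
    have ha1 : -2 < a := by
      have h2 := (heig k).2
      nlinarith [sq_nonneg c]
    have ha2 : a ≤ 2 := by
      have h1 := (heig k).1
      nlinarith [sq_nonneg c]
    have hb := wave_scalar a ha1 ha2 g hdot1' hdotrec t
    refine hb.trans ?_
    have hle : 8 / (2 + a) ≤ Kbig := by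
      rw [hK]
      apply div_le_div_of_nonneg_left (by norm_num) hKpos
      have h2 := (heig k).2
      nlinarith [sq_nonneg c]
    exact mul_le_mul_of_nonneg_right hle (sq_nonneg _)
  -- norm of y t
  have hnormsq : ∀ w : EuclideanSpace ℝ (Fin N),
      ‖w‖ ^ 2 = ∑ k, ((⇑(hAh.eigenvectorBasis k) : Fin N → ℝ) ⬝ᵥ ⇑w) ^ 2 := by
    intro w
    have := hAh.eigenvectorBasis.sum_inner_mul_inner w w
    rw [← real_inner_self_eq_norm_sq, ← this]
    refine Finset.sum_congr rfl fun k _ => ?_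
    rw [real_inner_comm w, hinner, sq, dotProduct_comm]
  set Yv : ℕ → EuclideanSpace ℝ (Fin N) := fun t => (WithLp.equiv 2 _).symm (y t) with hYv
  set CY : ℝ := Real.sqrt Kbig * ‖Yv 0‖ with hCY
  have hCYnonneg : 0 ≤ CY := mul_nonneg (Real.sqrt_nonneg _) (norm_nonneg _)
  have hYt : ∀ t, ‖Yv t‖ ≤ CY := by
    intro t
    have hsq : ‖Yv t‖ ^ 2 ≤ Kbig * ‖Yv 0‖ ^ 2 := by
      rw [hnormsq, hnormsq, Finset.mul_sum]
      exact Finset.sum_le_sum fun k _ => hmode k t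
    have := Real.sqrt_le_sqrt hsq
    rwa [Real.sqrt_sq (norm_nonneg _), Real.sqrt_mul hKnonneg, Real.sqrt_sq (norm_nonneg _)] at this
  -- coordinate bounds
  have hcoord : ∀ (w : EuclideanSpace ℝ (Fin N)) i, |w i| ≤ ‖w‖ := by
    intro w i
    rw [EuclideanSpace.norm_eq]
    have h1 : ‖w i‖ ^ 2 ≤ ∑ j, ‖w j‖ ^ 2 :=
      Finset.single_le_sum (f := fun j => ‖w j‖ ^ 2)
        (fun j _ => sq_nonneg _) (Finset.mem_univ i)
    have h2 := Real.sqrt_le_sqrt h1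
    rwa [Real.sqrt_sq (norm_nonneg _), Real.norm_eq_abs] at h2
  set C : ℝ := (∑ i, (s i)⁻¹) * CY with hC
  have hsuminv : ∀ i, 0 ≤ (s i)⁻¹ := fun i => (inv_nonneg).mpr (hspos i).le
  have hCnonneg : 0 ≤ C := mul_nonneg (Finset.sum_nonneg fun i _ => hsuminv i) hCYnonneg
  have hubound : ∀ t i, |(p t).1 i| ≤ C := by
    intro t i
    have h1 : (p t).1 i = (s i)⁻¹ * y t i := by
      rw [hy]
      show (p t).1 i = (s i)⁻¹ * (E *ᵥ (p t).1) i
      rw [hE, Matrix.mulVec_diagonal, ← mul_assoc, inv_mul_cancel₀ (hspos i).ne', one_mul]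
    rw [h1, abs_mul, abs_inv, abs_of_pos (hspos i)]
    have h2 : |y t i| ≤ CY := (hcoord (Yv t) i).trans (hYt t)
    have h3 : (s i)⁻¹ ≤ ∑ j, (s j)⁻¹ :=
      Finset.single_le_sum (fun j _ => hsuminv j) (Finset.mem_univ i)
    rw [hC]
    exact mul_le_mul h3 h2 (abs_nonneg _) (Finset.sum_nonneg fun j _ => hsuminv j)
  refine ⟨C, fun t => ?_⟩
  rw [hMz t]
  rw [pi_norm_le_iff_of_nonneg hCnonneg]
  intro i
  rcases i with i | i
  · rw [Sum.elim_inl, Real.norm_eq_abs]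
    exact hubound t i
  · rw [Sum.elim_inr, Real.norm_eq_abs]
    cases t with
    | zero => exact hubound 0 i
    | succ n =>
      have h2 : (p (n+1)).2 = (p n).1 := rfl
      rw [h2]
      exact hubound n i
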